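/- Let N_a, N_b, N_c be positive naturals with N = N_a + N_b + N_c, and let q_a, q_b, q_c be naturals with q_a+q_b+q_c = k, k ≤ √N/2, q_a ≤ N_a/2, q_b ≤ N_b/2, q_c ≤ N_c/2. Then the three-class hypergeometric probability H₃ = [C(N_a,q_a)·C(N_b,q_b)·C(N_c,q_c)]/C(N,k) and the multinomial probability M = (k!/(q_a!·q_b!·q_c!))·(N_a/N)^{q_a}·(N_b/N)^{q_b}·(N_c/N)^{q_c} satisfy (1 - 2q_a²/N_a - 2q_b²/N_b - 2q_c²/N_c)·M ≤ H₃ ≤ (1 + 4k²/N)·M. -/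

import Mathlib

open Finset in
lemma prod_bounds_aux (n : ℝ) (hn : 0 < n) :
    ∀ q : ℕ, (q : ℝ) ≤ n →
      0 ≤ (∏ i ∈ range q, (n - i)) ∧
      (1 - q ^ 2 / (2 * n)) * n ^ q ≤ (∏ i ∈ range q, (n - i)) ∧
      (∏ i ∈ range q, (n - i)) ≤ n ^ q := by
  intro q
  induction q with
  | zero => intro _; simp
  | succ q ih =>
    intro hq
    have hq1 : (q : ℝ) + 1 ≤ n := by push_cast at hq; linarith
    obtain ⟨h0, hl, hu⟩ := ih (by linarith)
    rw [Finset.prod_range_succ]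
    have hnq : (0:ℝ) ≤ n - q := by linarith
    have hpow : (0:ℝ) ≤ n ^ q := by positivity
    refine ⟨mul_nonneg h0 hnq, ?_, ?_⟩
    · have h1 : (1 - (q:ℝ) ^ 2 / (2 * n)) * n ^ q * (n - q) ≤
          (∏ i ∈ range q, (n - i)) * (n - q) :=
        mul_le_mul_of_nonneg_right hl hnq
      refine le_trans ?_ h1
      have key : (1 - ((q:ℝ) + 1) ^ 2 / (2 * n)) * n ^ (q + 1) ≤
          (1 - (q:ℝ) ^ 2 / (2 * n)) * n ^ q * (n - q) := by
        rw [← sub_nonneg]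
        have expand : (1 - (q:ℝ) ^ 2 / (2 * n)) * n ^ q * (n - q) -
            (1 - ((q:ℝ) + 1) ^ 2 / (2 * n)) * n ^ (q + 1) =
            n ^ q * (1 / 2 + q ^ 3 / (2 * n)) := by
          rw [pow_succ n q]
          field_simp
          ring
        rw [expand]
        positivity
      push_cast
      exact key
    · rw [pow_succ]
      exact mul_le_mul hu (by linarith) hnq hpow

open Finset in
lemma choose_cast_eq (n q : ℕ) (h : q ≤ n) :
    (Nat.choose n q : ℝ) * (Nat.factorial q : ℝ) = ∏ i ∈ range q, ((n : ℝ) - i) := by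
  have h1 : ((Nat.descFactorial n q : ℕ) : ℝ) = ∏ i ∈ range q, ((n : ℝ) - i) := by
    rw [Nat.descFactorial_eq_prod_range, Nat.cast_prod]
    refine Finset.prod_congr rfl fun i hi => ?_
    have hi' : i ≤ n := le_trans (Nat.le_of_lt (Finset.mem_range.mp hi)) h
    rw [Nat.cast_sub hi']
  rw [← h1, Nat.descFactorial_eq_factorial_mul_choose]
  push_cast
  ring

set_option maxHeartbeats 1000000 in
theorem stmt_9 (Na Nb Nc k qa qb qc : ℕ) (hNa : 0 < Na) (hNb : 0 < Nb) (hNc : 0 < Nc)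
    (hq : qa + qb + qc = k)
    (hk : (k : ℝ) ≤ Real.sqrt (Na + Nb + Nc) / 2)
    (hqa : (qa : ℝ) ≤ Na / 2) (hqb : (qb : ℝ) ≤ Nb / 2) (hqc : (qc : ℝ) ≤ Nc / 2) :
    let N : ℕ := Na + Nb + Nc
    let H : ℝ := (Nat.choose Na qa * Nat.choose Nb qb * Nat.choose Nc qc : ℝ)
      / (Nat.choose N k : ℝ)
    let M : ℝ := ((Nat.factorial k : ℝ) /
        (Nat.factorial qa * Nat.factorial qb * Nat.factorial qc : ℝ)) *
      ((Na : ℝ) / N) ^ qa * ((Nb : ℝ) / N) ^ qb * ((Nc : ℝ) / N) ^ qc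
    (1 - 2 * qa ^ 2 / Na - 2 * qb ^ 2 / Nb - 2 * qc ^ 2 / Nc) * M ≤ H ∧
      H ≤ (1 + 4 * k ^ 2 / N) * M := by
  intro N H M
  have hNar : (0:ℝ) < Na := by exact_mod_cast hNa
  have hNbr : (0:ℝ) < Nb := by exact_mod_cast hNb
  have hNcr : (0:ℝ) < Nc := by exact_mod_cast hNc
  have hNcast : (N : ℝ) = (Na : ℝ) + Nb + Nc := by
    show ((Na + Nb + Nc : ℕ) : ℝ) = _
    push_cast; ring
  have hNr : (0 : ℝ) < N := by rw [hNcast]; positivity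
  -- 4 k^2 ≤ N
  have hsq := Real.sq_sqrt (show (0:ℝ) ≤ (Na:ℝ) + Nb + Nc by positivity)
  have h4k : 4 * (k:ℝ) ^ 2 ≤ N := by
    rw [hNcast]
    nlinarith only [Real.sqrt_nonneg ((Na:ℝ) + Nb + Nc), hk, hsq, Nat.cast_nonneg (α := ℝ) k]
  have hNa1 : (1:ℝ) ≤ Na := by exact_mod_cast hNa
  have hNb1 : (1:ℝ) ≤ Nb := by exact_mod_cast hNb
  have hNc1 : (1:ℝ) ≤ Nc := by exact_mod_cast hNc
  have hkR : (k : ℝ) ≤ N := by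
    have hkk : (k:ℝ) ≤ (k:ℝ)^2 + 1 := by nlinarith only [sq_nonneg ((k:ℝ) - 1)]
    linarith only [hkk, h4k, hNcast, hNa1, hNb1, hNc1]
  have hkN : k ≤ N := by exact_mod_cast hkR
  have hqaNa : (qa : ℝ) ≤ Na := by linarith only [hqa, hNar]
  have hqbNb : (qb : ℝ) ≤ Nb := by linarith only [hqb, hNbr]
  have hqcNc : (qc : ℝ) ≤ Nc := by linarith only [hqc, hNcr]
  have hqaN : qa ≤ Na := by exact_mod_cast hqaNa
  have hqbN : qb ≤ Nb := by exact_mod_cast hqbNb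
  have hqcN : qc ≤ Nc := by exact_mod_cast hqcNc
  set A := ∏ i ∈ Finset.range qa, ((Na : ℝ) - i) with hAdef
  set B := ∏ i ∈ Finset.range qb, ((Nb : ℝ) - i) with hBdef
  set C := ∏ i ∈ Finset.range qc, ((Nc : ℝ) - i) with hCdef
  set D := ∏ i ∈ Finset.range k, ((N : ℝ) - i) with hDdef
  obtain ⟨hA0, hAl, hAu⟩ := prod_bounds_aux (Na : ℝ) hNar qa hqaNa
  obtain ⟨hB0, hBl, hBu⟩ := prod_bounds_aux (Nb : ℝ) hNbr qb hqbNb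
  obtain ⟨hC0, hCl, hCu⟩ := prod_bounds_aux (Nc : ℝ) hNcr qc hqcNc
  obtain ⟨hD0, hDl, hDu⟩ := prod_bounds_aux (N : ℝ) hNr k hkR
  rw [← hAdef] at hA0 hAl hAu
  rw [← hBdef] at hB0 hBl hBu
  rw [← hCdef] at hC0 hCl hCu
  rw [← hDdef] at hD0 hDl hDu
  have hDpos : (0:ℝ) < D := by
    rw [hDdef]
    refine Finset.prod_pos fun i hi => ?_
    have : (i : ℝ) < k := by exact_mod_cast Finset.mem_range.mp hi
    linarith only [this, hkR]
  have hfa : (0:ℝ) < (Nat.factorial qa : ℝ) := by exact_mod_cast qa.factorial_pos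
  have hfb : (0:ℝ) < (Nat.factorial qb : ℝ) := by exact_mod_cast qb.factorial_pos
  have hfc : (0:ℝ) < (Nat.factorial qc : ℝ) := by exact_mod_cast qc.factorial_pos
  have hfk : (0:ℝ) < (Nat.factorial k : ℝ) := by exact_mod_cast k.factorial_pos
  have hchA := choose_cast_eq Na qa hqaN
  have hchB := choose_cast_eq Nb qb hqbN
  have hchC := choose_cast_eq Nc qc hqcN
  have hchD := choose_cast_eq N k hkN
  rw [← hAdef] at hchA
  rw [← hBdef] at hchB
  rw [← hCdef] at hchC
  rw [← hDdef] at hchD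
  clear_value A B C D
  -- key identity
  set ra : ℝ := A / (Na:ℝ) ^ qa with hra
  set rb : ℝ := B / (Nb:ℝ) ^ qb with hrb
  set rc : ℝ := C / (Nc:ℝ) ^ qc with hrc
  set s : ℝ := (N:ℝ) ^ k / D with hs
  have hHM : H = M * (ra * rb * rc * s) := by
    show (Nat.choose Na qa * Nat.choose Nb qb * Nat.choose Nc qc : ℝ)
      / (Nat.choose N k : ℝ) = _
    have hchD' : (Nat.choose N k : ℝ) = D / (Nat.factorial k : ℝ) := by
      field_simp [← hchD]
      exact hchD
    have hchA' : (Nat.choose Na qa : ℝ) = A / (Nat.factorial qa : ℝ) := by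
      field_simp [← hchA]
      exact hchA
    have hchB' : (Nat.choose Nb qb : ℝ) = B / (Nat.factorial qb : ℝ) := by
      field_simp [← hchB]
      exact hchB
    have hchC' : (Nat.choose Nc qc : ℝ) = C / (Nat.factorial qc : ℝ) := by
      field_simp [← hchC]
      exact hchC
    rw [hchA', hchB', hchC', hchD']
    show _ = ((Nat.factorial k : ℝ) /
        (Nat.factorial qa * Nat.factorial qb * Nat.factorial qc : ℝ)) *
      ((Na : ℝ) / N) ^ qa * ((Nb : ℝ) / N) ^ qb * ((Nc : ℝ) / N) ^ qc *
      (A / (Na:ℝ) ^ qa * (B / (Nb:ℝ) ^ qb) * (C / (Nc:ℝ) ^ qc) * ((N:ℝ) ^ k / D))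
    rw [div_pow, div_pow, div_pow]
    field_simp
    rw [← hq, pow_add, pow_add]
    ring
  have hM0 : (0:ℝ) ≤ M := by
    show (0:ℝ) ≤ ((Nat.factorial k : ℝ) /
        (Nat.factorial qa * Nat.factorial qb * Nat.factorial qc : ℝ)) *
      ((Na : ℝ) / N) ^ qa * ((Nb : ℝ) / N) ^ qb * ((Nc : ℝ) / N) ^ qc
    positivity
  -- bounds on ra rb rc s
  have hpa : (0:ℝ) < (Na:ℝ) ^ qa := by positivity
  have hpb : (0:ℝ) < (Nb:ℝ) ^ qb := by positivity
  have hpc : (0:ℝ) < (Nc:ℝ) ^ qc := by positivity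
  have hpN : (0:ℝ) < (N:ℝ) ^ k := by positivity
  have hra0 : 0 ≤ ra := by rw [hra]; exact div_nonneg hA0 hpa.le
  have hrb0 : 0 ≤ rb := by rw [hrb]; exact div_nonneg hB0 hpb.le
  have hrc0 : 0 ≤ rc := by rw [hrc]; exact div_nonneg hC0 hpc.le
  have hra1 : ra ≤ 1 := by rw [hra, div_le_one hpa]; exact hAu
  have hrb1 : rb ≤ 1 := by rw [hrb, div_le_one hpb]; exact hBu
  have hrc1 : rc ≤ 1 := by rw [hrc, div_le_one hpc]; exact hCu
  have hral : 1 - 2 * (qa:ℝ) ^ 2 / Na ≤ ra := by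
    rw [hra, le_div_iff₀ hpa]
    have : (1 - 2 * (qa:ℝ) ^ 2 / Na) * (Na:ℝ) ^ qa ≤
        (1 - (qa:ℝ) ^ 2 / (2 * Na)) * (Na:ℝ) ^ qa := by
      apply mul_le_mul_of_nonneg_right _ (le_of_lt hpa)
      rw [sub_le_sub_iff_left, div_le_div_iff₀ (by positivity) (by positivity)]
      nlinarith only [sq_nonneg (qa:ℝ), hNar]
    linarith only [this, hAl]
  have hrbl : 1 - 2 * (qb:ℝ) ^ 2 / Nb ≤ rb := by
    rw [hrb, le_div_iff₀ hpb]
    have : (1 - 2 * (qb:ℝ) ^ 2 / Nb) * (Nb:ℝ) ^ qb ≤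
        (1 - (qb:ℝ) ^ 2 / (2 * Nb)) * (Nb:ℝ) ^ qb := by
      apply mul_le_mul_of_nonneg_right _ (le_of_lt hpb)
      rw [sub_le_sub_iff_left, div_le_div_iff₀ (by positivity) (by positivity)]
      nlinarith only [sq_nonneg (qb:ℝ), hNbr]
    linarith only [this, hBl]
  have hrcl : 1 - 2 * (qc:ℝ) ^ 2 / Nc ≤ rc := by
    rw [hrc, le_div_iff₀ hpc]
    have : (1 - 2 * (qc:ℝ) ^ 2 / Nc) * (Nc:ℝ) ^ qc ≤
        (1 - (qc:ℝ) ^ 2 / (2 * Nc)) * (Nc:ℝ) ^ qc := by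
      apply mul_le_mul_of_nonneg_right _ (le_of_lt hpc)
      rw [sub_le_sub_iff_left, div_le_div_iff₀ (by positivity) (by positivity)]
      nlinarith only [sq_nonneg (qc:ℝ), hNcr]
    linarith only [this, hCl]
  have hs1 : 1 ≤ s := by rw [hs, le_div_iff₀ hDpos]; linarith only [hDu]
  have hsu : s ≤ 1 + 4 * (k:ℝ) ^ 2 / N := by
    rw [hs, div_le_iff₀ hDpos]
    have hstep : (1 + 4 * (k:ℝ) ^ 2 / N) * ((1 - (k:ℝ) ^ 2 / (2 * N)) * (N:ℝ) ^ k) ≤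
        (1 + 4 * (k:ℝ) ^ 2 / N) * D :=
      mul_le_mul_of_nonneg_left hDl (by positivity)
    have hco : (N:ℝ) ^ k ≤ (1 + 4 * (k:ℝ) ^ 2 / N) * ((1 - (k:ℝ) ^ 2 / (2 * N)) * (N:ℝ) ^ k) := by
      have hexp : (1 + 4 * (k:ℝ) ^ 2 / N) * ((1 - (k:ℝ) ^ 2 / (2 * N)) * (N:ℝ) ^ k) -
          (N:ℝ) ^ k = (N:ℝ) ^ k * ((7 * (k:ℝ)^2 * N - 4 * (k:ℝ)^4) / (2 * N ^ 2)) := by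
        field_simp
        ring
      have hnum : (0:ℝ) ≤ 7 * (k:ℝ)^2 * N - 4 * (k:ℝ)^4 := by
        nlinarith only [mul_le_mul_of_nonneg_left h4k (sq_nonneg (k:ℝ)),
          mul_nonneg (sq_nonneg (k:ℝ)) hNr.le]
      linarith only [mul_nonneg (le_of_lt hpN) (div_nonneg hnum (by positivity : (0:ℝ) ≤ 2 * (N:ℝ)^2)), hexp]
    linarith only [hstep, hco]
  refine ⟨?_, ?_⟩
  · -- lower bound
    rw [hHM]
    have hxa : (0:ℝ) ≤ 1 - ra := by linarith
    have hxb : (0:ℝ) ≤ 1 - rb := by linarith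
    have hxc : (0:ℝ) ≤ 1 - rc := by linarith
    have hprod : 1 - 2 * (qa:ℝ) ^ 2 / Na - 2 * (qb:ℝ) ^ 2 / Nb - 2 * (qc:ℝ) ^ 2 / Nc ≤
        ra * rb * rc := by
      nlinarith only [mul_nonneg (mul_nonneg hxa hxb) hrc0, mul_nonneg hxa hxc,
        mul_nonneg hxb hxc, hral, hrbl, hrcl]
    have hprods : ra * rb * rc ≤ ra * rb * rc * s := by
      nlinarith only [mul_nonneg (mul_nonneg hra0 hrb0) hrc0, hs1]
    calc (1 - 2 * (qa:ℝ) ^ 2 / Na - 2 * (qb:ℝ) ^ 2 / Nb - 2 * (qc:ℝ) ^ 2 / Nc) * M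
        = M * (1 - 2 * (qa:ℝ) ^ 2 / Na - 2 * (qb:ℝ) ^ 2 / Nb - 2 * (qc:ℝ) ^ 2 / Nc) := by ring
      _ ≤ M * (ra * rb * rc * s) :=
          mul_le_mul_of_nonneg_left (by linarith only [hprod, hprods]) hM0
  · -- upper bound
    rw [hHM]
    have hRs : ra * rb * rc * s ≤ s := by
      have h1 : ra * rb * rc ≤ 1 := by
        nlinarith only [hra0, hrb0, hrc0, hra1, hrb1, hrc1, mul_nonneg hra0 hrb0]
      linarith only [mul_le_mul_of_nonneg_right h1 (le_trans zero_le_one hs1)]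
    calc M * (ra * rb * rc * s) ≤ M * (1 + 4 * (k:ℝ) ^ 2 / N) :=
          mul_le_mul_of_nonneg_left (by linarith only [hRs, hsu]) hM0
      _ = (1 + 4 * (k:ℝ) ^ 2 / N) * M := by ring
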